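/- For every integers m ≥ 0 and n ≥ 1 there exists C_{m,n} > 0 such that for all k > 0 and all x with 0 < kx < 1, |(d/dx)^m [e^{-ikx} H_n^{(1)}(kx)]| ≤ C_{m,n} (kx)^{-n} x^{-m}. -/

import Mathlib

open MeasureTheory
open MeasureTheory
open Metric Set
open scoped NNReal Real

/-- The Hankel function of the first kind of order `n`, for positive real
argument, via Watson's contour integral representation
`H_n^{(1)}(z) = (2/(πz))^{1/2} e^{i(z - nπ/2 - π/4)} / Γ(n-1/2)
  · ∫_0^∞ e^{-u} u^{n-1/2} (1 + iu/(2z))^{n-1/2} du`. -/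
noncomputable def hankelH1 (n : ℕ) (z : ℝ) : ℂ :=
  ((2 : ℂ) / ((Real.pi : ℂ) * (z : ℂ))) ^ ((1:ℂ)/2) *
    Complex.exp (Complex.I * ((z : ℂ) - (n : ℂ) * (Real.pi : ℂ) / 2 - (Real.pi : ℂ) / 4)) /
    Complex.Gamma ((n : ℂ) - 1/2) *
    ∫ u in Set.Ioi (0:ℝ),
      Complex.exp (-(u : ℂ)) * (u : ℂ) ^ ((n : ℂ) - 1/2) *
        (1 + Complex.I * (u : ℂ) / (2 * (z : ℂ))) ^ ((n : ℂ) - 1/2)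

/-- Near-origin smoothness estimate for the non-oscillatory part of the Hankel
kernel: for `n ≥ 1`, `0 < kx < 1`,
`|(d/dx)^m [e^{-ikx} H_n^{(1)}(kx)]| ≤ C_{m,n} (kx)^{-n} x^{-m}`, uniformly in `k`. -/

lemma cauchy_est {f : ℂ → ℂ} {c : ℂ} {R M : ℝ} (hR : 0 < R)
    (hf : DifferentiableOn ℂ f (Metric.closedBall c R))
    (hM : ∀ w ∈ Metric.closedBall c R, ‖f w‖ ≤ M) (m : ℕ) :
    ‖iteratedDeriv m f c‖ ≤ m.factorial * M * R⁻¹ ^ m := by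
  lift R to ℝ≥0 using hR.le
  have hR' : 0 < R := by exact_mod_cast hR
  have h := hf.hasFPowerSeriesOnBall hR'
  have key := h.factorial_smul (y := (1:ℂ)) m
  have e1 : iteratedDeriv m f c = m.factorial • (cauchyPowerSeries f c R m fun _ => (1:ℂ)) := by
    rw [iteratedDeriv_eq_iteratedFDeriv, key]
  have hM0 : 0 ≤ M := le_trans (norm_nonneg _) (hM c (mem_closedBall_self (by exact_mod_cast hR.le)))
  have hcont : Continuous fun θ : ℝ => ‖f (circleMap c R θ)‖ := by
    apply Continuous.norm
    rw [← continuousOn_univ]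
    exact hf.continuousOn.comp (continuous_circleMap c R).continuousOn
      (fun θ _ => (circleMap_mem_closedBall c (by exact_mod_cast hR.le) θ))
  have hInt : (∫ θ : ℝ in (0)..2 * Real.pi, ‖f (circleMap c R θ)‖) ≤ 2 * Real.pi * M := by
    have : (∫ θ : ℝ in (0)..2 * Real.pi, ‖f (circleMap c R θ)‖)
        ≤ ∫ _θ : ℝ in (0)..2 * Real.pi, M := by
      apply intervalIntegral.integral_mono_on Real.two_pi_pos.le
        (hcont.intervalIntegrable _ _) (intervalIntegrable_const)
      exact fun θ _ => hM _ (circleMap_mem_closedBall c (by exact_mod_cast hR.le) θ)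
    simpa [mul_comm] using this
  have hp := norm_cauchyPowerSeries_le f c R m
  have happ : ‖cauchyPowerSeries f c R m fun _ => (1:ℂ)‖ ≤ ‖cauchyPowerSeries f c R m‖ := by
    simpa using (cauchyPowerSeries f c R m).le_opNorm (fun _ => (1:ℂ))
  rw [e1]
  have : ‖(m.factorial : ℕ) • (cauchyPowerSeries f c R m fun _ => (1:ℂ))‖
      = (m.factorial : ℝ) * ‖cauchyPowerSeries f c R m fun _ => (1:ℂ)‖ := by
    simp [norm_smul]
  rw [this]
  have h2 : ‖cauchyPowerSeries f c R m‖ ≤ M * (R:ℝ)⁻¹ ^ m := by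
    refine hp.trans ?_
    have hRabs : |(R:ℝ)| = (R:ℝ) := abs_of_nonneg R.coe_nonneg
    rw [hRabs]
    gcongr ?_ * _
    calc (2 * Real.pi)⁻¹ * ∫ θ : ℝ in (0)..2 * Real.pi, ‖f (circleMap c R θ)‖
        ≤ (2 * Real.pi)⁻¹ * (2 * Real.pi * M) :=
          mul_le_mul_of_nonneg_left hInt (by positivity)
      _ = M := by field_simp
  calc (m.factorial : ℝ) * ‖cauchyPowerSeries f c R m fun _ => (1:ℂ)‖
      ≤ (m.factorial : ℝ) * (M * (R:ℝ)⁻¹ ^ m) := by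
        gcongr
        exact happ.trans h2
    _ = m.factorial * M * (R:ℝ)⁻¹ ^ m := by ring

noncomputable def hk (n : ℕ) (w : ℂ) : ℂ :=
  ((2 : ℂ) / ((Real.pi : ℂ) * w)) ^ ((1:ℂ)/2) *
    Complex.exp (Complex.I * (- (n : ℂ) * (Real.pi : ℂ) / 2 - (Real.pi : ℂ) / 4)) /
    Complex.Gamma ((n : ℂ) - 1/2) *
    ∫ u in Set.Ioi (0:ℝ),
      Complex.exp (-(u : ℂ)) * (u : ℂ) ^ ((n : ℂ) - 1/2) *
        (1 + Complex.I * (u : ℂ) / (2 * w)) ^ ((n : ℂ) - 1/2)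

-- imaginary part of the base
lemma base_im (u : ℝ) (w : ℂ) (hw : w ≠ 0) :
    (1 + Complex.I * (u : ℂ) / (2 * w)).im = u * (2 * w.re) / Complex.normSq (2 * w) := by
  simp [Complex.div_im, Complex.normSq_apply, Complex.mul_re, Complex.mul_im]

lemma base_im_pos {u : ℝ} (hu : 0 < u) {w : ℂ} (hw : 0 < w.re) :
    0 < (1 + Complex.I * (u : ℂ) / (2 * w)).im := by
  have hw0 : w ≠ 0 := fun h => by simp [h] at hw
  rw [base_im u w hw0]
  have : 0 < Complex.normSq (2 * w) := by
    rw [Complex.normSq_pos]; simpa using hw0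
  positivity

lemma base_mem {u : ℝ} (hu : 0 < u) {w : ℂ} (hw : 0 < w.re) :
    (1 + Complex.I * (u : ℂ) / (2 * w)) ∈ Complex.slitPlane := by
  rw [Complex.mem_slitPlane_iff]
  exact Or.inr (base_im_pos hu hw).ne'

lemma base_ne {u : ℝ} (hu : 0 < u) {w : ℂ} (hw : 0 < w.re) :
    (1 + Complex.I * (u : ℂ) / (2 * w)) ≠ 0 :=
  Complex.slitPlane_ne_zero (base_mem hu hw)

lemma abs_cpow_real_exp {z : ℂ} (hz : z ≠ 0) {t : ℂ} (ht : t.im = 0) :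
    ‖z ^ t‖ = ‖z‖ ^ t.re := by
  rw [Complex.norm_cpow_of_ne_zero hz, ht, mul_zero, Real.exp_zero, div_one]

lemma one_add_rpow_le {σ : ℝ} (hσ : 0 < σ) {u : ℝ} (hu : 0 ≤ u) :
    (1 + u) ^ σ ≤ 2 ^ σ * (1 + u ^ σ) := by
  rcases le_total u 1 with h | h
  · have h1 : (1 + u) ^ σ ≤ 2 ^ σ :=
      Real.rpow_le_rpow (by linarith) (by linarith) hσ.le
    have h2 : (0:ℝ) ≤ u ^ σ := Real.rpow_nonneg hu σ
    nlinarith [Real.rpow_nonneg (show (0:ℝ) ≤ 2 by norm_num) σ]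
  · have h1 : (1 + u) ^ σ ≤ (2 * u) ^ σ :=
      Real.rpow_le_rpow (by linarith) (by linarith) hσ.le
    have h2 : (2 * u) ^ σ = 2 ^ σ * u ^ σ := Real.mul_rpow (by norm_num) hu
    have h3 : (0:ℝ) ≤ 2 ^ σ := Real.rpow_nonneg (by norm_num) σ
    nlinarith [Real.rpow_nonneg hu σ]

lemma int_master {σ : ℝ} (hσ : 0 < σ) {c : ℝ} (hc : 0 < c) :
    IntegrableOn (fun u : ℝ => Real.exp (-u) * u ^ σ * (1 + u / c) ^ σ) (Set.Ioi 0) := by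
  have h1 : IntegrableOn (fun u : ℝ => Real.exp (-u) * u ^ σ) (Set.Ioi 0) := by
    simpa using Real.GammaIntegral_convergent (by linarith : (0:ℝ) < σ + 1)
  have h2 : IntegrableOn (fun u : ℝ => Real.exp (-u) * u ^ (σ + σ)) (Set.Ioi 0) := by
    simpa using Real.GammaIntegral_convergent (by linarith : (0:ℝ) < σ + σ + 1)
  set K : ℝ := ((c+1)/c) ^ σ * 2 ^ σ with hK
  have hK0 : (0:ℝ) ≤ K := by positivity
  have hg : IntegrableOn (fun u : ℝ =>
      K * (Real.exp (-u) * u ^ σ) + K * (Real.exp (-u) * u ^ (σ+σ))) (Set.Ioi 0) :=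
    (h1.const_mul K).add (h2.const_mul K)
  apply hg.mono'
  · apply ContinuousOn.aestronglyMeasurable _ measurableSet_Ioi
    apply ContinuousOn.mul
    · exact ((Real.continuous_exp.comp continuous_neg).continuousOn.mul
        (continuousOn_id.rpow_const (fun x hx => Or.inl (ne_of_gt hx))))
    · exact (continuousOn_const.add (continuousOn_id.div_const c)).rpow_const
        (fun x _ => Or.inr hσ.le)
  · rw [ae_restrict_iff' measurableSet_Ioi]
    filter_upwards with u hu
    have hu0 : 0 < u := hu
    have e0 : (0:ℝ) ≤ Real.exp (-u) * u ^ σ * (1 + u / c) ^ σ := by positivity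
    rw [Real.norm_eq_abs, abs_of_nonneg e0]
    have key : (1 + u / c) ^ σ ≤ K * (1 + u ^ σ) := by
      have s1 : (1 + u / c) ^ σ ≤ (((c+1)/c) * (1 + u)) ^ σ := by
        apply Real.rpow_le_rpow (by positivity) _ hσ.le
        have e1 : 1 + u/c = (c+u)/c := by field_simp
        have e2 : ((c+1)/c) * (1 + u) = ((c+1)*(1+u))/c := by ring
        rw [e1, e2, div_le_div_iff₀ hc hc]
        nlinarith [mul_pos hu0 hc, sq_nonneg c, mul_pos hc hc]
      have s2 : (((c+1)/c) * (1 + u)) ^ σ = ((c+1)/c) ^ σ * (1 + u) ^ σ :=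
        Real.mul_rpow (by positivity) (by linarith)
      have s3 := one_add_rpow_le hσ hu0.le
      calc (1 + u / c) ^ σ ≤ ((c+1)/c) ^ σ * (1 + u) ^ σ := by rw [← s2]; exact s1
        _ ≤ ((c+1)/c) ^ σ * (2 ^ σ * (1 + u ^ σ)) := by
            apply mul_le_mul_of_nonneg_left s3 (by positivity)
        _ = K * (1 + u ^ σ) := by rw [hK]; ring
    have expand : Real.exp (-u) * u ^ σ * (K * (1 + u ^ σ))
        = K * (Real.exp (-u) * u ^ σ) + K * (Real.exp (-u) * u ^ (σ+σ)) := by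
      rw [Real.rpow_add hu0]
      ring
    calc Real.exp (-u) * u ^ σ * (1 + u / c) ^ σ
        ≤ Real.exp (-u) * u ^ σ * (K * (1 + u ^ σ)) := by
          apply mul_le_mul_of_nonneg_left key (by positivity)
      _ = _ := expand

noncomputable def Gfun (n : ℕ) (w : ℂ) : ℂ :=
  ∫ u in Set.Ioi (0:ℝ),
    Complex.exp (-(u : ℂ)) * (u : ℂ) ^ ((n : ℂ) - 1/2) *
      (1 + Complex.I * (u : ℂ) / (2 * w)) ^ ((n : ℂ) - 1/2)

lemma s_im (n : ℕ) : ((n:ℂ) - 1/2).im = 0 := by simp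
lemma s_re (n : ℕ) : ((n:ℂ) - 1/2).re = (n:ℝ) - 1/2 := by simp
lemma s1_im (n : ℕ) : ((n:ℂ) - 1/2 - 1).im = 0 := by simp
lemma s1_re (n : ℕ) : ((n:ℂ) - 1/2 - 1).re = (n:ℝ) - 1/2 - 1 := by simp

lemma cont_base {w : ℂ} (hw : w ≠ 0) :
    Continuous (fun u : ℝ => 1 + Complex.I * (u : ℂ) / (2 * w)) := by
  apply continuous_const.add
  exact ((continuous_const.mul Complex.continuous_ofReal).div_const (2*w) : Continuous fun u : ℝ => Complex.I * (u:ℂ) / (2*w))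

lemma cont_integrand {n : ℕ} {w : ℂ} (hw : 0 < w.re) (t : ℂ) :
    ContinuousOn (fun u : ℝ => Complex.exp (-(u : ℂ)) * (u : ℂ) ^ ((n:ℂ) - 1/2) *
      (1 + Complex.I * (u : ℂ) / (2 * w)) ^ t) (Set.Ioi 0) := by
  have hw0 : w ≠ 0 := fun h => by simp [h] at hw
  apply ContinuousOn.mul
  · apply ContinuousOn.mul
    · exact (Complex.continuous_exp.comp Complex.continuous_ofReal.neg).continuousOn
    · intro u hu
      exact ((Complex.continuous_ofReal.continuousAt).cpow continuousAt_const
        (Complex.ofReal_mem_slitPlane.2 hu)).continuousWithinAt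
  · intro u hu
    exact (((cont_base hw0).continuousAt).cpow continuousAt_const
      (base_mem hu hw)).continuousWithinAt

lemma abs_base_le {u : ℝ} (hu : 0 ≤ u) {w : ℂ} (hw : w ≠ 0) :
    ‖1 + Complex.I * (u:ℂ) / (2*w)‖ ≤ 1 + u / (2 * ‖w‖) := by
  refine (norm_add_le _ _).trans ?_
  have : ‖Complex.I * (u:ℂ) / (2*w)‖ = u / (2 * ‖w‖) := by
    rw [norm_div, norm_mul, norm_mul, Complex.norm_I, Complex.norm_real, Real.norm_eq_abs, Complex.norm_two,
      one_mul, abs_of_nonneg hu]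
  rw [norm_one, this]

lemma norm_int {n : ℕ} {u : ℝ} (hu : 0 < u) {w : ℂ} (hw : 0 < w.re) :
    ‖Complex.exp (-(u:ℂ)) * (u:ℂ) ^ ((n:ℂ)-1/2) * (1 + Complex.I*(u:ℂ)/(2*w)) ^ ((n:ℂ)-1/2)‖
      = Real.exp (-u) * u ^ ((n:ℝ)-1/2) *
        ‖1 + Complex.I*(u:ℂ)/(2*w)‖ ^ ((n:ℝ)-1/2) := by
  rw [norm_mul, norm_mul]
  congr 1
  congr 1
  · simp [Complex.norm_exp]
  · rw [
      abs_cpow_real_exp (Complex.ofReal_ne_zero.mpr hu.ne') (s_im n), s_re n,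
      Complex.norm_real, Real.norm_eq_abs, abs_of_pos hu]
  · rw [abs_cpow_real_exp (base_ne hu hw) (s_im n), s_re n]

lemma sigma_pos {n : ℕ} (hn : 1 ≤ n) : (0:ℝ) < (n:ℝ) - 1/2 := by
  have : (1:ℝ) ≤ n := by exact_mod_cast hn
  linarith

lemma norm_int_le {n : ℕ} (hn : 1 ≤ n) {u : ℝ} (hu : 0 < u) {w : ℂ} (hw : 0 < w.re)
    {δ : ℝ} (hδ : 0 < δ) (hδw : δ ≤ ‖w‖) :
    ‖Complex.exp (-(u:ℂ)) * (u:ℂ) ^ ((n:ℂ)-1/2) * (1 + Complex.I*(u:ℂ)/(2*w)) ^ ((n:ℂ)-1/2)‖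
      ≤ Real.exp (-u) * u ^ ((n:ℝ)-1/2) * (1 + u / (2*δ)) ^ ((n:ℝ)-1/2) := by
  rw [norm_int hu hw]
  have hw0 : w ≠ 0 := fun h => by simp [h] at hw
  have h1 : ‖1 + Complex.I*(u:ℂ)/(2*w)‖ ≤ 1 + u / (2*δ) := by
    refine (abs_base_le hu.le hw0).trans ?_
    have : u / (2 * ‖w‖) ≤ u / (2*δ) := by
      apply div_le_div_of_nonneg_left hu.le (by positivity) (by linarith)
    linarith
  have h2 : ‖1 + Complex.I*(u:ℂ)/(2*w)‖ ^ ((n:ℝ)-1/2)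
      ≤ (1 + u / (2*δ)) ^ ((n:ℝ)-1/2) :=
    Real.rpow_le_rpow (norm_nonneg _) h1 (sigma_pos hn).le
  have : (0:ℝ) ≤ Real.exp (-u) * u ^ ((n:ℝ)-1/2) := by positivity
  exact mul_le_mul_of_nonneg_left h2 this

lemma int_Gfun {n : ℕ} (hn : 1 ≤ n) {w : ℂ} (hw : 0 < w.re)
    {δ : ℝ} (hδ : 0 < δ) (hδw : δ ≤ ‖w‖) :
    IntegrableOn (fun u : ℝ => Complex.exp (-(u:ℂ)) * (u:ℂ) ^ ((n:ℂ)-1/2) *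
      (1 + Complex.I*(u:ℂ)/(2*w)) ^ ((n:ℂ)-1/2)) (Set.Ioi 0) := by
  apply Integrable.mono' (int_master (sigma_pos hn) (by positivity : (0:ℝ) < 2*δ))
  · exact (cont_integrand hw _).aestronglyMeasurable measurableSet_Ioi
  · rw [ae_restrict_iff' measurableSet_Ioi]
    filter_upwards with u hu
    exact norm_int_le hn hu hw hδ hδw

lemma Gfun_differentiableAt {n : ℕ} (hn : 1 ≤ n) {w₀ : ℂ} (hw : 0 < w₀.re) :
    DifferentiableAt ℂ (Gfun n) w₀ := by
  have hσ : (0:ℝ) < (n:ℝ) - 1/2 := sigma_pos hn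
  set δ : ℝ := w₀.re / 2 with hδdef
  have hδ : 0 < δ := by positivity
  set Rm : ℝ := ‖w₀‖ + δ with hRmdef
  have hRm0 : 0 < Rm := by
    have h0 := norm_nonneg w₀
    positivity
  have hball : ∀ w ∈ Metric.ball w₀ δ, δ ≤ w.re ∧ ‖w‖ ≤ Rm := by
    intro w hwb
    rw [Metric.mem_ball, Complex.dist_eq] at hwb
    have h1 : |(w - w₀).re| ≤ ‖w - w₀‖ := Complex.abs_re_le_norm _
    have h2 : (w - w₀).re = w.re - w₀.re := by simp
    rw [h2] at h1
    have h3 := (abs_le.1 h1).1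
    have h4 := (abs_le.1 h1).2
    constructor
    · have : w₀.re - δ = δ := by rw [hδdef]; ring
      linarith [hwb]
    · have h5 : ‖w‖ ≤ ‖w₀‖ + ‖w - w₀‖ := by
        calc ‖w‖ = ‖w₀ + (w - w₀)‖ := by ring_nf
          _ ≤ _ := norm_add_le _ _
      rw [hRmdef]; linarith
  clear_value δ Rm
  set s : ℂ := (n:ℂ) - 1/2 with hsdef
  set F' : ℂ → ℝ → ℂ := fun w u => Complex.exp (-(u:ℂ)) * (u:ℂ) ^ s *
      (s * (1 + Complex.I * (u:ℂ) / (2*w)) ^ (s-1) *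
        ((0 * (2*w) - Complex.I * (u:ℂ) * 2) / (2*w) ^ 2)) with hF'def
  have key := hasDerivAt_integral_of_dominated_loc_of_deriv_le
    (μ := volume.restrict (Set.Ioi (0:ℝ))) (x₀ := w₀)
    (F := fun w u => Complex.exp (-(u:ℂ)) * (u:ℂ) ^ s *
      (1 + Complex.I * (u:ℂ) / (2*w)) ^ s)
    (F' := F')
    (bound := fun u => (‖s‖ * Rm^2 / δ^3) *
      (Real.exp (-u) * u ^ ((n:ℝ)-1/2) * (1 + u / (2*δ)) ^ ((n:ℝ)-1/2)))
    (Metric.ball_mem_nhds w₀ hδ) ?_ ?_ ?_ ?_ ?_ ?_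
  · exact ⟨_, key.2⟩
  · -- measurability of F w for w near w₀
    filter_upwards [Metric.ball_mem_nhds w₀ hδ] with w hwb
    have hwre : 0 < w.re := lt_of_lt_of_le hδ (hball w hwb).1
    exact (cont_integrand hwre _).aestronglyMeasurable measurableSet_Ioi
  · -- integrability of F w₀
    exact int_Gfun hn hw hδ (le_trans (by linarith [hδdef]) (Complex.re_le_norm w₀))
  · -- measurability of F' w₀
    apply ContinuousOn.aestronglyMeasurable _ measurableSet_Ioi
    have hw0 : w₀ ≠ 0 := fun h => by simp [h] at hw
    apply ContinuousOn.mul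
    · apply ContinuousOn.mul
      · exact (Complex.continuous_exp.comp Complex.continuous_ofReal.neg).continuousOn
      · intro u hu
        exact ((Complex.continuous_ofReal.continuousAt).cpow continuousAt_const
          (Complex.ofReal_mem_slitPlane.2 hu)).continuousWithinAt
    · apply ContinuousOn.mul
      · apply ContinuousOn.mul continuousOn_const
        intro u hu
        exact (((cont_base hw0).continuousAt).cpow continuousAt_const
          (base_mem hu hw)).continuousWithinAt
      · apply ContinuousOn.div_const
        apply Continuous.continuousOn
        continuity
  · -- bound for F'
    rw [ae_restrict_iff' measurableSet_Ioi]
    filter_upwards with u hu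
    intro w hwb
    have hu0 : (0:ℝ) < u := hu
    have hwre : δ ≤ w.re := (hball w hwb).1
    have hwre0 : 0 < w.re := lt_of_lt_of_le hδ hwre
    have hwabs : ‖w‖ ≤ Rm := (hball w hwb).2
    have hwabs0 : δ ≤ ‖w‖ := le_trans hwre (Complex.re_le_norm w)
    have hw0 : w ≠ 0 := fun h => by simp [h] at hwre0
    set b : ℂ := 1 + Complex.I * (u:ℂ) / (2*w) with hbdef
    have hbne : b ≠ 0 := base_ne hu0 hwre0
    have hb0 : 0 < ‖b‖ := by
      simpa [norm_pos_iff] using hbne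
    have hbim : u * δ / (2 * Rm^2) ≤ b.im := by
      rw [hbdef, base_im u w hw0]
      have hnsq : Complex.normSq (2*w) ≤ 4 * Rm^2 := by
        rw [Complex.normSq_eq_norm_sq, norm_mul, Complex.norm_two]
        calc (2 * ‖w‖)^2 ≤ (2 * Rm)^2 := by nlinarith [norm_nonneg w]
          _ = 4 * Rm^2 := by ring
      have hnsq0 : 0 < Complex.normSq (2*w) := by
        rw [Complex.normSq_pos]
        simpa using hw0
      calc u * δ / (2 * Rm^2) = u * (2*δ) / (4 * Rm^2) := by ring
        _ ≤ u * (2*w.re) / Complex.normSq (2*w) := by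
            apply div_le_div₀ (by positivity) (by nlinarith) hnsq0 hnsq
  -- end hbim
    have hbim0 : 0 < u * δ / (2 * Rm^2) := by positivity
    have hbinv : (‖b‖)⁻¹ ≤ 2 * Rm^2 / (u * δ) := by
      have habsge : u * δ / (2 * Rm^2) ≤ ‖b‖ := by
        calc u * δ / (2 * Rm^2) ≤ b.im := hbim
          _ ≤ |b.im| := le_abs_self _
          _ ≤ ‖b‖ := Complex.abs_im_le_norm b
      calc (‖b‖)⁻¹ ≤ (u * δ / (2 * Rm^2))⁻¹ :=
            inv_anti₀ hbim0 habsge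
        _ = 2 * Rm^2 / (u * δ) := by field_simp
    have hble : ‖b‖ ≤ 1 + u / (2*δ) := by
      refine (abs_base_le hu0.le hw0).trans ?_
      have : u / (2 * ‖w‖) ≤ u / (2*δ) :=
        div_le_div_of_nonneg_left hu0.le (by positivity) (by linarith)
      linarith
    -- norm computation
    have hE : ‖F' w u‖ = Real.exp (-u) * u ^ ((n:ℝ)-1/2) *
        (‖s‖ * (‖b‖ ^ ((n:ℝ)-1/2) * (‖b‖)⁻¹) *
          (u * 2 / (2 * ‖w‖)^2)) := by
      rw [hF'def]
      simp only [norm_mul]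
      rw [Complex.norm_exp]
      have e1 : (-(u:ℂ)).re = -u := by simp
      rw [e1]
      have e2 : ‖(u:ℂ) ^ s‖ = u ^ ((n:ℝ)-1/2) := by
        rw [abs_cpow_real_exp (Complex.ofReal_ne_zero.mpr hu0.ne') (s_im n), s_re n,
          Complex.norm_real, Real.norm_eq_abs, abs_of_pos hu0]
      have e3 : ‖b ^ (s-1)‖ = ‖b‖ ^ ((n:ℝ)-1/2) * (‖b‖)⁻¹ := by
        rw [abs_cpow_real_exp hbne (s1_im n), s1_re n]
        rw [show (n:ℝ) - 1/2 - 1 = ((n:ℝ)-1/2) + (-1) from by ring,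
          Real.rpow_add hb0, Real.rpow_neg_one]
      have e4 : ‖(0 * (2*w) - Complex.I * (u:ℂ) * 2) / (2*w)^2‖
          = u * 2 / (2 * ‖w‖)^2 := by
        rw [norm_div, norm_pow, norm_mul, Complex.norm_two]
        congr 1
        rw [zero_mul, zero_sub, norm_neg, norm_mul, norm_mul, Complex.norm_I,
          Complex.norm_real, Real.norm_eq_abs, Complex.norm_two, one_mul, abs_of_pos hu0]
      rw [e2, e3, e4]
    rw [hE]
    have step : Real.exp (-u) * u ^ ((n:ℝ)-1/2) *
        (‖s‖ * (‖b‖ ^ ((n:ℝ)-1/2) * (‖b‖)⁻¹) *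
          (u * 2 / (2 * ‖w‖)^2))
        ≤ Real.exp (-u) * u ^ ((n:ℝ)-1/2) *
        (‖s‖ * ((1 + u/(2*δ)) ^ ((n:ℝ)-1/2) * (2 * Rm^2 / (u * δ))) *
          (u * 2 / (2 * δ)^2)) := by
      gcongr
    refine step.trans (le_of_eq ?_)
    field_simp
  · -- integrability of bound
    apply Integrable.const_mul
    exact int_master hσ (by positivity : (0:ℝ) < 2*δ)
  · -- differentiability
    rw [ae_restrict_iff' measurableSet_Ioi]
    filter_upwards with u hu
    intro w hwb
    have hu0 : (0:ℝ) < u := hu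
    have hwre0 : 0 < w.re := lt_of_lt_of_le hδ (hball w hwb).1
    have hw0 : w ≠ 0 := fun h => by simp [h] at hwre0
    have h2w : (2*w : ℂ) ≠ 0 := by simpa using hw0
    have hder1 : HasDerivAt (fun w : ℂ => Complex.I * (u:ℂ) / (2*w))
        ((0 * (2*w) - Complex.I * (u:ℂ) * 2) / (2*w)^2) w := by
      apply HasDerivAt.div (hasDerivAt_const w (Complex.I * (u:ℂ))) _ h2w
      simpa using (hasDerivAt_id w).const_mul (2:ℂ)
    have hder2 := hder1.const_add (1:ℂ)
    have hder3 := hder2.cpow_const (c := s) (base_mem hu0 hwre0)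
    exact hder3.const_mul _

lemma two_div_pi_w_re {w : ℂ} (hw : 0 < w.re) :
    0 < ((2:ℂ)/((Real.pi:ℂ)*w)).re := by
  have hw0 : w ≠ 0 := fun h => by simp [h] at hw
  have hpw : ((Real.pi:ℂ)*w) ≠ 0 := by
    simp [Real.pi_ne_zero, hw0]
  rw [Complex.div_re]
  have h2 : 0 < Complex.normSq ((Real.pi:ℂ)*w) := by rwa [Complex.normSq_pos]
  have hre : ((Real.pi:ℂ)*w).re = Real.pi * w.re := by
    simp [Complex.mul_re]
  have him : ((2:ℂ)).im = 0 := by simp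
  have h2re : ((2:ℂ)).re = 2 := by simp
  rw [hre, him, h2re]
  have h3 : (0:ℝ) < Real.pi * w.re := by positivity
  have h4 : (0:ℝ) ≤ 0 / Complex.normSq ((Real.pi:ℂ)*w) := by simp
  have h5 : 0 < 2 * (Real.pi * w.re) / Complex.normSq ((Real.pi:ℂ)*w) := by positivity
  simp only [zero_mul]
  linarith [h5, h4]

lemma two_div_pi_w_ne {w : ℂ} (hw : 0 < w.re) : ((2:ℂ)/((Real.pi:ℂ)*w)) ≠ 0 := by
  have := two_div_pi_w_re hw
  intro h
  rw [h] at this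
  simp at this

lemma hk_differentiableOn {n : ℕ} (hn : 1 ≤ n) :
    DifferentiableOn ℂ (hk n) {w : ℂ | 0 < w.re} := by
  intro w hw
  have hw' : 0 < w.re := hw
  have hw0 : w ≠ 0 := fun h => by simp [h] at hw'
  apply DifferentiableAt.differentiableWithinAt
  apply DifferentiableAt.mul
  · apply DifferentiableAt.div_const
    apply DifferentiableAt.mul_const
    apply DifferentiableAt.cpow
    · apply DifferentiableAt.div (differentiableAt_const _)
      · exact (differentiableAt_const _).mul differentiableAt_id
      · simp [Real.pi_ne_zero, hw0]
    · exact differentiableAt_const _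
    · exact Complex.mem_slitPlane_iff.2 (Or.inl (two_div_pi_w_re hw'))
  · exact Gfun_differentiableAt hn hw'

lemma I0_integrable {σ : ℝ} (hσ : 0 < σ) :
    IntegrableOn (fun u : ℝ => Real.exp (-u) * u ^ σ * (4 + u) ^ σ) (Set.Ioi 0) := by
  have h : IntegrableOn (fun u : ℝ => (4:ℝ) ^ σ * (Real.exp (-u) * u ^ σ * (1 + u/4) ^ σ)) (Set.Ioi 0) :=
    (int_master hσ (by norm_num : (0:ℝ) < 4)).const_mul ((4:ℝ) ^ σ)
  apply IntegrableOn.congr_fun h _ measurableSet_Ioi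
  intro u hu
  have hu0 : (0:ℝ) < u := hu
  have h4 : (4 + u : ℝ) ^ σ = 4 ^ σ * (1 + u/4) ^ σ := by
    rw [← Real.mul_rpow (by norm_num) (by positivity)]
    congr 1
    ring
  show (4:ℝ) ^ σ * (Real.exp (-u) * u ^ σ * (1 + u/4) ^ σ)
      = Real.exp (-u) * u ^ σ * (4 + u) ^ σ
  rw [h4]
  ring

lemma hk_bound (n : ℕ) (hn : 1 ≤ n) :
    ∃ A : ℝ, 0 ≤ A ∧ ∀ w : ℂ, 0 < w.re → ‖w‖ ≤ 2 →
      ‖hk n w‖ ≤ A * ‖w‖ ^ (-(n:ℝ)) := by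
  have hσ : (0:ℝ) < (n:ℝ) - 1/2 := sigma_pos hn
  set σ : ℝ := (n:ℝ) - 1/2 with hσdef
  set I₀ : ℝ := ∫ u in Set.Ioi (0:ℝ), Real.exp (-u) * u ^ σ * (4 + u) ^ σ with hI₀
  have hI₀0 : 0 ≤ I₀ := by
    apply setIntegral_nonneg measurableSet_Ioi
    intro u hu
    have hu0 : (0:ℝ) < u := hu
    positivity
  refine ⟨(2/Real.pi) ^ ((1:ℝ)/2) * (‖Complex.Gamma ((n:ℂ)-1/2)‖)⁻¹ *
    ((2:ℝ) ^ (-σ) * I₀), mul_nonneg (mul_nonneg (by positivity)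
      (inv_nonneg.2 (norm_nonneg _))) (mul_nonneg (by positivity) hI₀0), ?_⟩
  intro w hw habs2
  have hw0 : w ≠ 0 := fun h => by simp [h] at hw
  have habs0 : 0 < ‖w‖ := by simpa [norm_pos_iff] using hw0
  -- norm of the prefactor
  have hP : ‖((2:ℂ)/((Real.pi:ℂ)*w)) ^ ((1:ℂ)/2)‖
      = (2/Real.pi) ^ ((1:ℝ)/2) * ‖w‖ ^ (-(1:ℝ)/2) := by
    rw [abs_cpow_real_exp (two_div_pi_w_ne hw) (by simp : ((1:ℂ)/2).im = 0)]
    have h1 : ((1:ℂ)/2).re = (1:ℝ)/2 := by norm_num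
    have h2 : ‖((2:ℂ)/((Real.pi:ℂ)*w))‖ = (2/Real.pi) * (‖w‖)⁻¹ := by
      rw [norm_div, norm_mul, Complex.norm_two, Complex.norm_real, Real.norm_eq_abs,
        abs_of_pos Real.pi_pos]
      field_simp
    rw [h1, h2, Real.mul_rpow (by positivity) (by positivity),
      ← Real.rpow_neg_one (‖w‖), ← Real.rpow_mul habs0.le]
    norm_num
  -- norm of the oscillatory constant
  have hE : ‖Complex.exp (Complex.I *
      (-(n:ℂ) * (Real.pi:ℂ) / 2 - (Real.pi:ℂ)/4))‖ = 1 := by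
    rw [Complex.norm_exp]
    have : (Complex.I * (-(n:ℂ) * (Real.pi:ℂ) / 2 - (Real.pi:ℂ)/4)).re = 0 := by
      simp [Complex.mul_re]
    rw [this, Real.exp_zero]
  -- bound on the integral
  have hGb : ‖Gfun n w‖ ≤ (2 * ‖w‖) ^ (-σ) * I₀ := by
    rw [hI₀]
    have hInt : IntegrableOn (fun u : ℝ =>
        (2 * ‖w‖) ^ (-σ) * (Real.exp (-u) * u ^ σ * (4 + u) ^ σ)) (Set.Ioi 0) :=
      (I0_integrable hσ).const_mul _
    have hle : ∀ u ∈ Set.Ioi (0:ℝ),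
        ‖Complex.exp (-(u:ℂ)) * (u:ℂ) ^ ((n:ℂ)-1/2) *
          (1 + Complex.I*(u:ℂ)/(2*w)) ^ ((n:ℂ)-1/2)‖
        ≤ (2 * ‖w‖) ^ (-σ) * (Real.exp (-u) * u ^ σ * (4 + u) ^ σ) := by
      intro u hu
      have hu0 : (0:ℝ) < u := hu
      rw [norm_int hu0 hw]
      have hbb : ‖1 + Complex.I*(u:ℂ)/(2*w)‖ ^ σ
          ≤ (2 * ‖w‖) ^ (-σ) * (4 + u) ^ σ := by
        have h1 : ‖1 + Complex.I*(u:ℂ)/(2*w)‖ ≤ (2 * ‖w‖ + u) / (2 * ‖w‖) := by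
          refine (abs_base_le hu0.le hw0).trans (le_of_eq ?_)
          field_simp
        have h2 : ‖1 + Complex.I*(u:ℂ)/(2*w)‖ ^ σ
            ≤ ((2 * ‖w‖ + u) / (2 * ‖w‖)) ^ σ :=
          Real.rpow_le_rpow (norm_nonneg _) h1 hσ.le
        refine h2.trans ?_
        rw [Real.div_rpow (by positivity) (by positivity)]
        rw [div_eq_mul_inv, mul_comm, ← Real.rpow_neg (by positivity)]
        apply mul_le_mul_of_nonneg_left _ (by positivity)
        exact Real.rpow_le_rpow (by positivity) (by linarith) hσ.le
      calc Real.exp (-u) * u ^ σ * ‖1 + Complex.I*(u:ℂ)/(2*w)‖ ^ σ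
          ≤ Real.exp (-u) * u ^ σ * ((2 * ‖w‖) ^ (-σ) * (4 + u) ^ σ) := by
            apply mul_le_mul_of_nonneg_left hbb (by positivity)
        _ = (2 * ‖w‖) ^ (-σ) * (Real.exp (-u) * u ^ σ * (4 + u) ^ σ) := by ring
    calc ‖Gfun n w‖
        ≤ ∫ u in Set.Ioi (0:ℝ), (2 * ‖w‖) ^ (-σ) *
            (Real.exp (-u) * u ^ σ * (4 + u) ^ σ) := by
          apply norm_integral_le_of_norm_le hInt
          rw [ae_restrict_iff' measurableSet_Ioi]
          filter_upwards with u hu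
          exact hle u hu
      _ = (2 * ‖w‖) ^ (-σ) * ∫ u in Set.Ioi (0:ℝ),
            Real.exp (-u) * u ^ σ * (4 + u) ^ σ := integral_const_mul _ _
  -- assemble
  have hkeq : hk n w = ((2:ℂ)/((Real.pi:ℂ)*w)) ^ ((1:ℂ)/2) *
      Complex.exp (Complex.I * (-(n:ℂ)*(Real.pi:ℂ)/2 - (Real.pi:ℂ)/4)) /
      Complex.Gamma ((n:ℂ)-1/2) * Gfun n w := rfl
  have hnorm : ‖hk n w‖ = (2/Real.pi) ^ ((1:ℝ)/2) * ‖w‖ ^ (-(1:ℝ)/2) /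
      ‖Complex.Gamma ((n:ℂ)-1/2)‖ * ‖Gfun n w‖ := by
    rw [hkeq]
    simp only [norm_mul, norm_div]
    rw [hP, hE, mul_one]
  rw [hnorm]
  have hsplit : (2 * ‖w‖) ^ (-σ) = (2:ℝ) ^ (-σ) * ‖w‖ ^ (-σ) :=
    Real.mul_rpow (by norm_num) habs0.le
  calc (2/Real.pi) ^ ((1:ℝ)/2) * ‖w‖ ^ (-(1:ℝ)/2) /
      ‖Complex.Gamma ((n:ℂ)-1/2)‖ * ‖Gfun n w‖
      ≤ (2/Real.pi) ^ ((1:ℝ)/2) * ‖w‖ ^ (-(1:ℝ)/2) /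
        ‖Complex.Gamma ((n:ℂ)-1/2)‖ * ((2 * ‖w‖) ^ (-σ) * I₀) := by
        apply mul_le_mul_of_nonneg_left hGb (by positivity)
    _ = (2/Real.pi) ^ ((1:ℝ)/2) * (‖Complex.Gamma ((n:ℂ)-1/2)‖)⁻¹ *
        ((2:ℝ) ^ (-σ) * I₀) * (‖w‖ ^ (-(1:ℝ)/2) * ‖w‖ ^ (-σ)) := by
        rw [hsplit]; ring
    _ = (2/Real.pi) ^ ((1:ℝ)/2) * (‖Complex.Gamma ((n:ℂ)-1/2)‖)⁻¹ *
        ((2:ℝ) ^ (-σ) * I₀) * ‖w‖ ^ (-(n:ℝ)) := by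
        rw [← Real.rpow_add habs0]
        congr 1
        rw [hσdef]; ring


lemma exp_cancel (n : ℕ) (k y : ℝ) :
    Complex.exp (-Complex.I * (k:ℂ) * (y:ℂ)) * hankelH1 n (k * y) = hk n ((k:ℂ) * (y:ℂ)) := by
  unfold hankelH1 hk
  push_cast
  have hc : Complex.exp (-Complex.I * (k:ℂ) * (y:ℂ)) *
      Complex.exp (Complex.I * ((k:ℂ)*(y:ℂ) - (n:ℂ) * (Real.pi:ℂ) / 2 - (Real.pi:ℂ) / 4)) =
      Complex.exp (Complex.I * (-(n:ℂ) * (Real.pi:ℂ) / 2 - (Real.pi:ℂ) / 4)) := by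
    rw [← Complex.exp_add]
    congr 1
    ring
  rw [show ∀ e a b c d : ℂ, e * (a * b / c * d) = a * (e * b) / c * d from
    fun _ _ _ _ _ => by ring]
  rw [hc]

lemma analytic_iteratedDeriv {f : ℂ → ℂ} {U : Set ℂ}
    (hf : AnalyticOnNhd ℂ f U) (j : ℕ) : AnalyticOnNhd ℂ (iteratedDeriv j f) U := by
  induction j with
  | zero => simpa [iteratedDeriv_zero] using hf
  | succ i ih => rw [iteratedDeriv_succ]; exact ih.deriv

lemma iter_scale {f : ℂ → ℂ} {U : Set ℂ} (hU : IsOpen U) (hf : AnalyticOnNhd ℂ f U)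
    (k : ℝ) (m : ℕ) :
    ∀ y : ℝ, ((k:ℂ) * (y:ℂ)) ∈ U →
      iteratedDeriv m (fun t : ℝ => f ((k:ℂ) * (t:ℂ))) y
        = (k:ℂ)^m * iteratedDeriv m f ((k:ℂ)*(y:ℂ)) := by
  induction m with
  | zero => intro y _; simp
  | succ j ih =>
    intro y hy
    have hU' : IsOpen {t : ℝ | ((k:ℂ) * (t:ℂ)) ∈ U} := by
      have hcont : Continuous fun t : ℝ => (k:ℂ) * (t:ℂ) :=
        continuous_const.mul Complex.continuous_ofReal
      exact hU.preimage hcont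
    rw [iteratedDeriv_succ, iteratedDeriv_succ]
    have hev : (iteratedDeriv j fun t : ℝ => f ((k:ℂ) * (t:ℂ)))
        =ᶠ[nhds y] fun t : ℝ => (k:ℂ)^j * iteratedDeriv j f ((k:ℂ)*(t:ℂ)) := by
      filter_upwards [hU'.mem_nhds hy] with t ht
      exact ih t ht
    rw [hev.deriv_eq]
    have hg := analytic_iteratedDeriv hf j
    have hga : AnalyticAt ℂ (iteratedDeriv j f) ((k:ℂ)*(y:ℂ)) := hg _ hy
    have hd1 : HasDerivAt (fun w : ℂ => iteratedDeriv j f ((k:ℂ)*w))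
        (deriv (iteratedDeriv j f) ((k:ℂ)*(y:ℂ)) * ((k:ℂ)*1)) (y:ℂ) := by
      exact (hga.differentiableAt.hasDerivAt).comp (y:ℂ)
        ((hasDerivAt_id (y:ℂ)).const_mul (k:ℂ))
    have hd2 := hd1.comp_ofReal
    have hd3 := hd2.const_mul ((k:ℂ)^j)
    rw [hd3.deriv]
    ring


theorem stmt5 (m n : ℕ) (hn : 1 ≤ n) :
    ∃ C > 0, ∀ k x : ℝ, 0 < k → 0 < k * x → k * x < 1 →
      ‖iteratedDeriv m (fun y : ℝ =>
          Complex.exp (-Complex.I * (k : ℂ) * (y : ℂ)) * hankelH1 n (k * y)) x‖ ≤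
        C * (k * x) ^ (-(n : ℝ)) * x ^ (-(m : ℝ)) := by
  obtain ⟨A, hA0, hA⟩ := hk_bound n hn
  have hUopen : IsOpen {w : ℂ | 0 < w.re} := isOpen_lt continuous_const Complex.continuous_re
  have hana : AnalyticOnNhd ℂ (hk n) {w : ℂ | 0 < w.re} :=
    (hk_differentiableOn hn).analyticOnNhd hUopen
  have hC0 : (0:ℝ) < (m.factorial : ℝ) * A * 2 ^ (n:ℝ) * 2 ^ m + 1 := by
    have h1 : (0:ℝ) ≤ (m.factorial : ℝ) * A * 2 ^ (n:ℝ) * 2 ^ m := by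
      apply mul_nonneg (mul_nonneg (mul_nonneg (Nat.cast_nonneg _) hA0) _) (by positivity)
      exact (Real.rpow_pos_of_pos two_pos _).le
    linarith
  refine ⟨(m.factorial : ℝ) * A * 2 ^ (n:ℝ) * 2 ^ m + 1, hC0, ?_⟩
  intro k x hk0 hz0 hz1
  set z : ℝ := k * x with hzdef
  have hz0' : 0 < k * x := by rw [← hzdef]; exact hz0
  have hx0 : 0 < x := by nlinarith
  have hr : (0:ℝ) < z / 2 := by positivity
  -- Cauchy estimate at z
  have hsub : Metric.closedBall ((z:ℝ):ℂ) (z/2) ⊆ {w : ℂ | 0 < w.re} := by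
    intro w hwb
    rw [Metric.mem_closedBall, Complex.dist_eq] at hwb
    have h1 : |(w - (z:ℝ)).re| ≤ ‖w - (z:ℝ)‖ := Complex.abs_re_le_norm _
    have h2 : (w - ((z:ℝ):ℂ)).re = w.re - z := by simp
    rw [h2] at h1
    have := (abs_le.1 (h1.trans hwb)).1
    show 0 < w.re
    linarith
  have hMball : ∀ w ∈ Metric.closedBall ((z:ℝ):ℂ) (z/2),
      ‖hk n w‖ ≤ A * (z/2) ^ (-(n:ℝ)) := by
    intro w hwb
    have hwre : 0 < w.re := hsub hwb
    rw [Metric.mem_closedBall, Complex.dist_eq] at hwb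
    have h1 : |(w - (z:ℝ)).re| ≤ ‖w - (z:ℝ)‖ := Complex.abs_re_le_norm _
    have h2 : (w - ((z:ℝ):ℂ)).re = w.re - z := by simp
    rw [h2] at h1
    have h3 := abs_le.1 (h1.trans hwb)
    have habs : ‖w‖ ≤ 2 := by
      calc ‖w‖ = ‖(z:ℂ) + (w - (z:ℂ))‖ := by ring_nf
        _ ≤ ‖((z:ℝ):ℂ)‖ + ‖w - (z:ℝ)‖ := norm_add_le _ _
        _ ≤ z + z/2 := by
            rw [Complex.norm_real, Real.norm_eq_abs, abs_of_pos hz0]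
            linarith [hwb]
        _ ≤ 2 := by linarith
    have hge : z/2 ≤ ‖w‖ := le_trans (by linarith [h3.1]) (Complex.re_le_norm w)
    calc ‖hk n w‖ ≤ A * ‖w‖ ^ (-(n:ℝ)) := hA w hwre habs
      _ ≤ A * (z/2) ^ (-(n:ℝ)) := by
          apply mul_le_mul_of_nonneg_left _ hA0
          exact Real.rpow_le_rpow_of_nonpos hr hge (neg_nonpos.2 (Nat.cast_nonneg n))
  have hdiff : DifferentiableOn ℂ (hk n) (Metric.closedBall ((z:ℝ):ℂ) (z/2)) :=
    (hk_differentiableOn hn).mono hsub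
  have hcauchy := cauchy_est hr hdiff hMball m
  -- rewrite the function
  have hfun : (fun y : ℝ => Complex.exp (-Complex.I * (k:ℂ) * (y:ℂ)) * hankelH1 n (k * y))
      = fun y : ℝ => hk n ((k:ℂ) * (y:ℂ)) := funext (exp_cancel n k)
  have hmem : ((k:ℂ) * (x:ℂ)) ∈ {w : ℂ | 0 < w.re} := by
    show 0 < ((k:ℂ) * (x:ℂ)).re
    have : ((k:ℂ) * (x:ℂ)) = ((z:ℝ):ℂ) := by rw [hzdef]; push_cast; ring
    rw [this]
    simpa using hz0
  have hscale := iter_scale hUopen hana k m x hmem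
  have hcast : ((k:ℂ) * (x:ℂ)) = ((z:ℝ):ℂ) := by rw [hzdef]; push_cast; ring
  rw [hfun, hscale, hcast]
  rw [norm_mul, norm_pow, Complex.norm_real, Real.norm_eq_abs, abs_of_pos hk0]
  -- numeric chase
  have hN := hcauchy
  have e1 : (z/2) ^ (-(n:ℝ)) = z ^ (-(n:ℝ)) * 2 ^ (n:ℝ) := by
    rw [Real.div_rpow hz0.le (by norm_num), Real.rpow_neg (by norm_num : (0:ℝ) ≤ 2)]
    field_simp
  have e2 : k ^ m * ((z/2)⁻¹) ^ m = 2 ^ m * x ^ (-(m:ℝ)) := by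
    have h1 : k * (z/2)⁻¹ = 2 * x⁻¹ := by
      rw [hzdef]
      field_simp
    calc k ^ m * ((z/2)⁻¹) ^ m = (k * (z/2)⁻¹) ^ m := by rw [mul_pow]
      _ = (2 * x⁻¹) ^ m := by rw [h1]
      _ = 2 ^ m * x ^ (-(m:ℝ)) := by
          rw [mul_pow, Real.rpow_neg hx0.le, Real.rpow_natCast, inv_pow]
  calc k ^ m * ‖iteratedDeriv m (hk n) ((z:ℝ):ℂ)‖
      ≤ k ^ m * ((m.factorial : ℝ) * (A * (z/2) ^ (-(n:ℝ))) * ((z/2)⁻¹) ^ m) := by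
        apply mul_le_mul_of_nonneg_left hN (by positivity)
    _ = (m.factorial : ℝ) * A * ((z/2) ^ (-(n:ℝ))) * (k ^ m * ((z/2)⁻¹) ^ m) := by ring
    _ = (m.factorial : ℝ) * A * (z ^ (-(n:ℝ)) * 2 ^ (n:ℝ)) * (2 ^ m * x ^ (-(m:ℝ))) := by
        rw [e1, e2]
    _ = ((m.factorial : ℝ) * A * 2 ^ (n:ℝ) * 2 ^ m) * z ^ (-(n:ℝ)) * x ^ (-(m:ℝ)) := by ring
    _ ≤ ((m.factorial : ℝ) * A * 2 ^ (n:ℝ) * 2 ^ m + 1) * z ^ (-(n:ℝ)) * x ^ (-(m:ℝ)) := by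
        have hp1 : (0:ℝ) < z ^ (-(n:ℝ)) := Real.rpow_pos_of_pos hz0 _
        have hp2 : (0:ℝ) < x ^ (-(m:ℝ)) := Real.rpow_pos_of_pos hx0 _
        nlinarith
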